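/- With the attribute setup below, assume l ≥ 2, the family v is pairwise orthogonal, and all vectors v(i,j) have the same norm c > 0. Then for any i, j and any t ≠ i, the cosine similarity between a composite-concept representation and the centered representation of a base concept it does not contain equals S_cos(v(i,j), u_t) = −1/√(l·l'·(l−1)). -/

import Mathlib

open scoped InnerProductSpace
open Finset

/-- Cosine similarity of vectors in `ℝ^d`. -/
noncomputable def Scos {d : ℕ} (x y : EuclideanSpace ℝ (Fin d)) : ℝ :=
  ⟪x, y⟫_ℝ / (‖x‖ * ‖y‖)

theorem stmt_12
    {d l l' : ℕ} (hd : 1 ≤ d) (hl : 1 ≤ l) (hl' : 1 ≤ l')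
    (σ : ℝ) (hσ : 0 < σ)
    (v : Fin l → Fin l' → EuclideanSpace ℝ (Fin d))
    (vhat : Fin l → EuclideanSpace ℝ (Fin d))
    (vhat' : Fin l' → EuclideanSpace ℝ (Fin d))
    (μ : EuclideanSpace ℝ (Fin d))
    (u : Fin l → EuclideanSpace ℝ (Fin d))
    (u' : Fin l' → EuclideanSpace ℝ (Fin d))
    (hvhat : ∀ i, vhat i = (1 / (l' : ℝ)) • ∑ j, v i j)
    (hvhat' : ∀ j, vhat' j = (1 / (l : ℝ)) • ∑ i, v i j)
    (hμ : μ = (1 / ((l : ℝ) * (l' : ℝ))) • ∑ i, ∑ j, v i j)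
    (hu : ∀ i, u i = (1 / σ) • (vhat i - μ))
    (hu' : ∀ j, u' j = (1 / σ) • (vhat' j - μ))
    (hl2 : 2 ≤ l)
    (horth : ∀ i j i' j', (i, j) ≠ (i', j') → ⟪v i j, v i' j'⟫_ℝ = 0)
    (c : ℝ) (hcpos : 0 < c) (hc : ∀ i j, ‖v i j‖ = c)
    : ∀ i j t, t ≠ i →
      Scos (v i j) (u t) = -1 / Real.sqrt ((l : ℝ) * (l' : ℝ) * ((l : ℝ) - 1)) := by
  intro i j t hti
  have hlR : (1:ℝ) ≤ (l:ℝ) := by exact_mod_cast hl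
  have hl'R : (1:ℝ) ≤ (l':ℝ) := by exact_mod_cast hl'
  have hl2R : (2:ℝ) ≤ (l:ℝ) := by exact_mod_cast hl2
  have hlpos : (0:ℝ) < l := by linarith
  have hl'pos : (0:ℝ) < l' := by linarith
  have hBpos : (0:ℝ) < (l:ℝ) - 1 := by linarith
  have hinner : ∀ a b a' b', ⟪v a b, v a' b'⟫_ℝ = if a = a' ∧ b = b' then c^2 else 0 := by
    intro a b a' b'
    by_cases h : a = a' ∧ b = b'
    · obtain ⟨rfl, rfl⟩ := h
      rw [if_pos ⟨rfl, rfl⟩, real_inner_self_eq_norm_sq, hc]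
    · rw [if_neg h, horth]
      simp only [ne_eq, Prod.mk.injEq]
      tauto
  -- basic sums
  have T2 : ∀ a b, (∑ a', ∑ b', ⟪v a b, v a' b'⟫_ℝ) = c^2 := by
    intro a b
    simp [hinner, ite_and, Finset.sum_ite_eq, Finset.sum_ite_eq']
  have T1 : (∑ k, ⟪v i j, v t k⟫_ℝ) = 0 := by
    simp [hinner, Ne.symm hti]
  have T3 : (∑ jb, ∑ k, ⟪v t jb, v t k⟫_ℝ) = (l':ℝ) * c^2 := by
    simp [hinner, ite_and, Finset.sum_ite_eq, Finset.sum_ite_eq', mul_comm]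
  -- inner products
  have h1 : ⟪v i j, vhat t⟫_ℝ = 0 := by
    rw [hvhat, real_inner_smul_right, inner_sum]
    rw [T1, mul_zero]
  have h2 : ⟪v i j, μ⟫_ℝ = c^2 / ((l:ℝ) * l') := by
    rw [hμ, real_inner_smul_right]
    simp only [inner_sum]
    rw [T2, one_div, inv_mul_eq_div]
  have h3 : ⟪vhat t, vhat t⟫_ℝ = c^2 / l' := by
    rw [hvhat, real_inner_smul_right, real_inner_smul_left]
    simp [hinner, ite_and, Finset.sum_ite_eq, Finset.sum_ite_eq', sum_inner, inner_sum]
    field_simp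
    rw [← real_inner_self_eq_norm_sq]; simp only [sum_inner, inner_sum]; rw [Finset.sum_comm]; exact T3
  have h4 : ⟪vhat t, μ⟫_ℝ = c^2 / ((l:ℝ) * l') := by
    rw [hvhat, hμ, real_inner_smul_right, real_inner_smul_left]
    simp only [sum_inner]
    have : (∑ jb, ⟪v t jb, ∑ a, ∑ b, v a b⟫_ℝ) = (l':ℝ) * c^2 := by
      have : ∀ jb, ⟪v t jb, ∑ a, ∑ b, v a b⟫_ℝ = c^2 := by
        intro jb; simp only [inner_sum]; exact T2 t jb
      rw [Finset.sum_congr rfl (fun jb _ => this jb)]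
      simp [mul_comm]
    rw [this]
    field_simp
  have h5 : ⟪μ, μ⟫_ℝ = c^2 / ((l:ℝ) * l') := by
    rw [hμ, real_inner_smul_right, real_inner_smul_left]
    have : (∑ a, ∑ b, ⟪v a b, ∑ a', ∑ b', v a' b'⟫_ℝ) = ((l:ℝ) * l') * c^2 := by
      have h : ∀ a b, ⟪v a b, ∑ a', ∑ b', v a' b'⟫_ℝ = c^2 := by
        intro a b; simp only [inner_sum]; exact T2 a b
      rw [Finset.sum_congr rfl (fun a _ => Finset.sum_congr rfl (fun b _ => h a b))]
      simp; ring
    simp only [sum_inner]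
    rw [this]
    field_simp
  -- numerator
  have hnum : ⟪v i j, u t⟫_ℝ = -(c^2 / (σ * ((l:ℝ) * l'))) := by
    rw [hu, real_inner_smul_right, inner_sub_right, h1, h2]
    field_simp
    ring
  -- norm of u t
  have hnormsq : ‖vhat t - μ‖^2 = c^2 * ((l:ℝ) - 1) / ((l:ℝ) * l') := by
    rw [← real_inner_self_eq_norm_sq]
    have e : ⟪vhat t - μ, vhat t - μ⟫_ℝ
        = ⟪vhat t, vhat t⟫_ℝ - 2*⟪vhat t, μ⟫_ℝ + ⟪μ, μ⟫_ℝ := by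
      rw [inner_sub_left, inner_sub_right, inner_sub_right, real_inner_comm μ (vhat t)]
      ring
    rw [e, h3, h4, h5]
    field_simp
    ring
  have hnorm : ‖u t‖ = (1/σ) * (c * Real.sqrt (((l:ℝ) - 1) / ((l:ℝ) * l'))) := by
    rw [hu, norm_smul]
    have h1' : ‖(1/σ)‖ = 1/σ := by
      rw [Real.norm_eq_abs, abs_of_pos (by positivity)]
    rw [h1']
    congr 1
    have : ‖vhat t - μ‖ = Real.sqrt (c^2 * ((l:ℝ) - 1) / ((l:ℝ) * l')) := by
      rw [← hnormsq, Real.sqrt_sq (norm_nonneg _)]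
    rw [this]
    rw [mul_div_assoc, Real.sqrt_mul (by positivity), Real.sqrt_sq hcpos.le]
  -- final computation
  rw [Scos, hnum, hnorm, hc]
  have hsq : Real.sqrt (((l:ℝ) - 1) / ((l:ℝ) * l')) = Real.sqrt ((l:ℝ)-1) / Real.sqrt ((l:ℝ)*l') :=
    Real.sqrt_div hBpos.le _
  rw [hsq, Real.sqrt_mul (by positivity : (0:ℝ) ≤ (l:ℝ)*l')]
  have hsapos : 0 < Real.sqrt ((l:ℝ)*l') := Real.sqrt_pos.mpr (by positivity)
  have hsbpos : 0 < Real.sqrt ((l:ℝ)-1) := Real.sqrt_pos.mpr hBpos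
  have hsa2 : Real.sqrt ((l:ℝ)*l') * Real.sqrt ((l:ℝ)*l') = (l:ℝ)*l' :=
    Real.mul_self_sqrt (by positivity)
  set sa := Real.sqrt ((l:ℝ)*l')
  set sb := Real.sqrt ((l:ℝ)-1)
  field_simp
  linear_combination (-1)*hsa2
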